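/- Let G be a weighted graph on a finite vertex set V with G_tot > 0, let s, t ∈ V, and let x : V → ℝ satisfy x_s = 0, x_t = 1, and Σ_{u,v∈V} Ḡ(u,v)·(x_u − x_v)² = ε. For θ ∈ [0,1) let S_θ = {v ∈ V : x_v ≤ θ}. Then the average over θ uniform in [0,1) of Σ_{u,v} Ḡ(u,v)·|1_{S_θ}(u) − 1_{S_θ}(v)| is at most Σ_{u,v} Ḡ(u,v)·|x_u − x_v| ≤ √ε; consequently there exists θ ∈ [0,1) such that s ∈ S_θ, t ∉ S_θ, and Σ_{u,v} Ḡ(u,v)·|1_{S_θ}(u) − 1_{S_θ}(v)| ≤ √ε. -/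

import Mathlib

open MeasureTheory

lemma step_intervalIntegrable (c : ℝ) :
    IntervalIntegrable (fun θ : ℝ => if c ≤ θ then (1:ℝ) else 0) volume 0 1 := by
  apply Monotone.intervalIntegrable
  intro a b hab
  dsimp only
  split_ifs with h1 h2 <;> norm_num <;> exact h2 (h1.trans hab)

lemma step_integral (c : ℝ) :
    (∫ θ in (0:ℝ)..1, (if c ≤ θ then (1:ℝ) else 0)) = max 0 (min 1 (1 - c)) := by
  have hind : (fun θ : ℝ => if c ≤ θ then (1:ℝ) else 0)
      = Set.indicator (Set.Ici c) (fun _ => (1:ℝ)) := by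
    ext θ; simp [Set.indicator_apply]
  rw [intervalIntegral.integral_of_le zero_le_one, hind,
    MeasureTheory.setIntegral_indicator measurableSet_Ici]
  rw [MeasureTheory.setIntegral_const, smul_eq_mul, mul_one]
  rcases le_or_gt c 0 with hc | hc
  · have : Set.Ioc (0:ℝ) 1 ∩ Set.Ici c = Set.Ioc 0 1 := by
      ext θ; simp only [Set.mem_inter_iff, Set.mem_Ioc, Set.mem_Ici]
      constructor
      · exact fun h => h.1
      · exact fun h => ⟨h, hc.trans h.1.le⟩
    rw [this, measureReal_def, Real.volume_Ioc]
    rw [ENNReal.toReal_ofReal (by norm_num)]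
    rw [min_eq_left (by linarith : (1:ℝ) ≤ 1 - c), max_eq_right zero_le_one]
    norm_num
  rcases le_or_gt c 1 with hc1 | hc1
  · have : Set.Ioc (0:ℝ) 1 ∩ Set.Ici c = Set.Icc c 1 := by
      ext θ; simp only [Set.mem_inter_iff, Set.mem_Ioc, Set.mem_Icc, Set.mem_Ici]
      constructor
      · exact fun h => ⟨h.2, h.1.2⟩
      · exact fun h => ⟨⟨hc.trans_le h.1, h.2⟩, h.1⟩
    rw [this, measureReal_def, Real.volume_Icc, ENNReal.toReal_ofReal (by linarith)]
    rw [min_eq_right (by linarith), max_eq_right (by linarith)]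
  · have : Set.Ioc (0:ℝ) 1 ∩ Set.Ici c = ∅ := by
      ext θ; simp only [Set.mem_inter_iff, Set.mem_Ioc, Set.mem_Ici, Set.mem_empty_iff_false,
        iff_false, not_and]
      intro h h2; linarith [h.2]
    rw [this]
    simp only [measureReal_def, measure_empty, ENNReal.toReal_zero]
    rw [min_eq_right (by linarith), max_eq_left (by linarith)]

lemma cut_integral_le (a b : ℝ) :
    (∫ θ in (0:ℝ)..1, |(if a ≤ θ then (1:ℝ) else 0) - (if b ≤ θ then (1:ℝ) else 0)|) ≤ |a - b| := by
  wlog hab : a ≤ b generalizing a b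
  · calc (∫ θ in (0:ℝ)..1, |(if a ≤ θ then (1:ℝ) else 0) - (if b ≤ θ then (1:ℝ) else 0)|)
        = ∫ θ in (0:ℝ)..1, |(if b ≤ θ then (1:ℝ) else 0) - (if a ≤ θ then (1:ℝ) else 0)| :=
          intervalIntegral.integral_congr (fun θ _ => abs_sub_comm _ _)
      _ ≤ |b - a| := this b a (le_of_not_ge hab)
      _ = |a - b| := abs_sub_comm _ _
  have heq : Set.EqOn (fun θ : ℝ => |(if a ≤ θ then (1:ℝ) else 0) - (if b ≤ θ then (1:ℝ) else 0)|)
      (fun θ : ℝ => (if a ≤ θ then (1:ℝ) else 0) - (if b ≤ θ then (1:ℝ) else 0))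
      (Set.uIcc (0:ℝ) 1) := by
    intro θ _
    dsimp only
    rw [abs_of_nonneg]
    split_ifs with h1 h2 h3 <;> norm_num
    exact h1 (hab.trans h3)
  rw [intervalIntegral.integral_congr heq,
    intervalIntegral.integral_sub (step_intervalIntegrable a) (step_intervalIntegrable b),
    step_integral, step_integral, abs_of_nonpos (by linarith)]
  simp only [max_def, min_def]
  split_ifs <;> linarith

/-- Total weight (over ordered pairs) of a weighted graph. -/
noncomputable def total {V : Type*} [Fintype V] (G : V → V → ℝ) : ℝ := ∑ u, ∑ v, G u v

/-- Fraction of the `G`-edges cut by the threshold cut `S_θ = {v : x v ≤ θ}`. -/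
noncomputable def thresholdCut {V : Type*} [Fintype V] (G : V → V → ℝ) (x : V → ℝ) (θ : ℝ) : ℝ :=
  ∑ u, ∑ v, (G u v / total G) *
    |(if x u ≤ θ then (1 : ℝ) else 0) - (if x v ≤ θ then (1 : ℝ) else 0)|

/-- Cheeger-type rounding for minimum s-t-cut: if `x_s = 0`, `x_t = 1` and
`Σ Ḡ(u,v)(x_u − x_v)² = ε`, then the average over a uniform threshold `θ ∈ [0,1)` of the cut
fraction is at most `Σ Ḡ(u,v)|x_u − x_v| ≤ √ε`, so some threshold cut separates `s` from `t`
and cuts at most a `√ε` fraction of the edges. -/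
theorem threshold_rounding_st_cut {V : Type*} [Fintype V]
    (G : V → V → ℝ) (s t : V) (x : V → ℝ) (ε : ℝ)
    (hGsymm : ∀ u v, G u v = G v u) (hGnonneg : ∀ u v, 0 ≤ G u v)
    (hGtot : 0 < total G)
    (hs : x s = 0) (ht : x t = 1)
    (hcost : ∑ u, ∑ v, (G u v / total G) * (x u - x v) ^ 2 = ε) :
    (∫ θ in (0 : ℝ)..1, thresholdCut G x θ) ≤ ∑ u, ∑ v, (G u v / total G) * |x u - x v| ∧
    (∑ u, ∑ v, (G u v / total G) * |x u - x v|) ≤ Real.sqrt ε ∧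
    ∃ θ ∈ Set.Ico (0 : ℝ) 1, x s ≤ θ ∧ ¬ x t ≤ θ ∧ thresholdCut G x θ ≤ Real.sqrt ε := by
  have hcnonneg : ∀ u v : V, 0 ≤ G u v / total G := fun u v =>
    div_nonneg (hGnonneg u v) hGtot.le
  have hsum1 : ∑ u, ∑ v, (G u v / total G) = 1 := by
    rw [show ∑ u, ∑ v, (G u v / total G) = (∑ u, ∑ v, G u v) / total G by
      simp [Finset.sum_div]]
    exact div_self hGtot.ne'
  -- Part A
  have hint : ∀ u v : V, IntervalIntegrable (fun θ => (G u v / total G) *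
      |(if x u ≤ θ then (1:ℝ) else 0) - (if x v ≤ θ then (1:ℝ) else 0)|) volume 0 1 :=
    fun u v => (((step_intervalIntegrable (x u)).sub (step_intervalIntegrable (x v))).abs).const_mul _
  have heqC : ∀ θ : ℝ, thresholdCut G x θ
      = ∑ p : V × V, (G p.1 p.2 / total G) *
        |(if x p.1 ≤ θ then (1:ℝ) else 0) - (if x p.2 ≤ θ then (1:ℝ) else 0)| := by
    intro θ
    rw [Fintype.sum_prod_type]
    rfl
  have hcutint : IntervalIntegrable (fun θ => thresholdCut G x θ) volume 0 1 := by
    have heq : (fun θ => thresholdCut G x θ)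
        = (∑ p : V × V, fun θ => (G p.1 p.2 / total G) *
          |(if x p.1 ≤ θ then (1:ℝ) else 0) - (if x p.2 ≤ θ then (1:ℝ) else 0)|) := by
      funext θ
      rw [Finset.sum_apply, heqC θ]
    rw [heq]
    exact IntervalIntegrable.sum _ fun p _ => hint p.1 p.2
  have hA : (∫ θ in (0:ℝ)..1, thresholdCut G x θ)
      ≤ ∑ u, ∑ v, (G u v / total G) * |x u - x v| := by
    calc (∫ θ in (0:ℝ)..1, thresholdCut G x θ)
        = ∑ p : V × V, ∫ θ in (0:ℝ)..1, (G p.1 p.2 / total G) *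
            |(if x p.1 ≤ θ then (1:ℝ) else 0) - (if x p.2 ≤ θ then (1:ℝ) else 0)| := by
          simp_rw [heqC]
          exact intervalIntegral.integral_finset_sum (fun p _ => hint p.1 p.2)
      _ ≤ ∑ p : V × V, (G p.1 p.2 / total G) * |x p.1 - x p.2| := by
          refine Finset.sum_le_sum fun p _ => ?_
          rw [intervalIntegral.integral_const_mul]
          exact mul_le_mul_of_nonneg_left (cut_integral_le _ _) (hcnonneg p.1 p.2)
      _ = ∑ u, ∑ v, (G u v / total G) * |x u - x v| := Fintype.sum_prod_type _
  -- Part B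
  have hεnonneg : 0 ≤ ε := by
    rw [← hcost]
    exact Finset.sum_nonneg fun u _ => Finset.sum_nonneg fun v _ =>
      mul_nonneg (hcnonneg u v) (sq_nonneg _)
  have hB : (∑ u, ∑ v, (G u v / total G) * |x u - x v|) ≤ Real.sqrt ε := by
    have CS := Finset.sum_mul_sq_le_sq_mul_sq (Finset.univ : Finset (V × V))
      (fun p => Real.sqrt (G p.1 p.2 / total G))
      (fun p => Real.sqrt (G p.1 p.2 / total G) * |x p.1 - x p.2|)
    have eA : (∑ p : V × V, Real.sqrt (G p.1 p.2 / total G) *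
        (Real.sqrt (G p.1 p.2 / total G) * |x p.1 - x p.2|))
        = ∑ u, ∑ v, (G u v / total G) * |x u - x v| := by
      rw [Fintype.sum_prod_type]
      refine Finset.sum_congr rfl fun u _ => Finset.sum_congr rfl fun v _ => ?_
      rw [← mul_assoc, Real.mul_self_sqrt (hcnonneg u v)]
    have eB : (∑ p : V × V, Real.sqrt (G p.1 p.2 / total G) ^ 2)
        = ∑ u, ∑ v, (G u v / total G) := by
      rw [Fintype.sum_prod_type]
      refine Finset.sum_congr rfl fun u _ => Finset.sum_congr rfl fun v _ => ?_
      exact Real.sq_sqrt (hcnonneg u v)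
    have eC : (∑ p : V × V, (Real.sqrt (G p.1 p.2 / total G) * |x p.1 - x p.2|) ^ 2)
        = ∑ u, ∑ v, (G u v / total G) * (x u - x v) ^ 2 := by
      rw [Fintype.sum_prod_type]
      refine Finset.sum_congr rfl fun u _ => Finset.sum_congr rfl fun v _ => ?_
      rw [mul_pow, Real.sq_sqrt (hcnonneg u v), sq_abs]
    rw [eA, eB, eC, hsum1, hcost, one_mul] at CS
    have hSnn : 0 ≤ ∑ u, ∑ v, (G u v / total G) * |x u - x v| :=
      Finset.sum_nonneg fun u _ => Finset.sum_nonneg fun v _ =>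
        mul_nonneg (hcnonneg u v) (abs_nonneg _)
    exact (Real.le_sqrt hSnn hεnonneg).mpr CS
  refine ⟨hA, hB, ?_⟩
  by_contra hcon
  push_neg at hcon
  have hpos : ∀ θ ∈ Set.Ioo (0:ℝ) 1, 0 < thresholdCut G x θ - Real.sqrt ε := by
    intro θ hθ
    have h1 : x s ≤ θ := by rw [hs]; exact hθ.1.le
    have h2 : θ < x t := by rw [ht]; exact hθ.2
    have := hcon θ ⟨hθ.1.le, hθ.2⟩ h1 h2
    linarith
  have hposint := intervalIntegral.intervalIntegral_pos_of_pos_on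
    (hcutint.sub (intervalIntegrable_const (c := Real.sqrt ε))) hpos zero_lt_one
  rw [intervalIntegral.integral_sub hcutint (intervalIntegrable_const),
    intervalIntegral.integral_const] at hposint
  simp only [sub_zero, one_smul] at hposint
  linarith [hA.trans hB]
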